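/- For odd n ≥ 5, the permutations x = (1 2 … n) and y = (1 2 4) generate the alternating group A_n. -/

import Mathlib

open Equiv Equiv.Perm Subgroup List Finset

private lemma swap_shift' {α : Type*} [DecidableEq α] {a b c : α} (hab : a ≠ b) (hac : a ≠ c)
    (hbc : b ≠ c) : swap b a * swap a c = swap b c * swap a b := by
  ext i
  simp only [Equiv.Perm.mul_apply, swap_apply_def]
  split_ifs <;> simp_all

private lemma swap_conj_swap {α : Type*} [DecidableEq α] {a b c : α} (hac : a ≠ c)
    (hbc : b ≠ c) : swap a b * swap a c * swap a b = swap b c := by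
  nth_rewrite 3 [← swap_inv]
  rw [← swap_apply_apply, swap_apply_left, swap_apply_of_ne_of_ne hac.symm hbc.symm]


private lemma alternating_le_of_cycle {α : Type*} [DecidableEq α] [Fintype α] {σ : Perm α}
    (h1 : IsCycle σ) (h2 : σ.support = Finset.univ) (a : α) {H : Subgroup (Perm α)}
    (hσ : σ ∈ H) (hg : swap (σ a) (σ (σ a)) * swap a (σ a) ∈ H) :
    alternatingGroup α ≤ H := by
  set t : Perm α := swap a (σ a) with ht
  have ha : ∀ b : α, σ b ≠ b := fun b => mem_support.mp (h2 ▸ Finset.mem_univ b)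
  have step1 : ∀ m : ℕ, swap ((σ ^ m) a) ((σ ^ (m + 1)) a) * t ∈ H := by
    intro m
    induction m with
    | zero => simpa [ht] using H.one_mem
    | succ m ih =>
      have key : swap ((σ ^ (m + 1)) a) ((σ ^ (m + 2)) a) * t =
          σ * (swap ((σ ^ m) a) ((σ ^ (m + 1)) a) * t) * σ⁻¹ *
            (swap (σ a) (σ (σ a)) * t) := by
        have e : σ * (swap ((σ ^ m) a) ((σ ^ (m + 1)) a) * t) * σ⁻¹ =
            (σ * swap ((σ ^ m) a) ((σ ^ (m + 1)) a) * σ⁻¹) * (σ * t * σ⁻¹) := by group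
        rw [e, ← swap_apply_apply, ← swap_apply_apply, ht, mul_assoc,
          ← mul_assoc (swap (σ a) (σ (σ a))), swap_mul_self, one_mul,
          ← Equiv.Perm.mul_apply, ← Equiv.Perm.mul_apply, ← pow_succ', ← pow_succ']
      rw [key]
      exact H.mul_mem (H.mul_mem (H.mul_mem hσ ih) (H.inv_mem hσ)) hg
  have step2 : ∀ m : ℕ, (σ ^ m) a ≠ a → swap a ((σ ^ m) a) * t ∈ H := by
    intro m
    induction m with
    | zero => intro h; simp at h
    | succ m ih =>
      intro hne
      by_cases h5 : (σ ^ m) a = a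
      · have := step1 m
        rwa [h5] at this
      · have h6 : a ≠ (σ ^ (m + 1)) a := Ne.symm hne
        have key : swap a ((σ ^ (m + 1)) a) * t =
            (swap ((σ ^ m) a) ((σ ^ (m + 1)) a) * t) * (swap a ((σ ^ m) a) * t)⁻¹ *
              (swap ((σ ^ m) a) ((σ ^ (m + 1)) a) * t) := by
          rw [swap_comm a, ← swap_mul_swap_mul_swap (Ne.symm h5) h6]
          simp only [mul_inv_rev, swap_inv, ht, mul_assoc, swap_mul_self_mul]
        rw [key]
        exact H.mul_mem (H.mul_mem (step1 m) (H.inv_mem (ih h5))) (step1 m)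
  have step3 : ∀ b : α, b ≠ a → swap a b * t ∈ H := by
    intro b hb
    obtain ⟨m, hm⟩ := h1.exists_pow_eq (ha a) (ha b)
    rw [← hm]
    exact step2 m (hm.symm ▸ hb)
  have step4 : ∀ b c : α, b ≠ c → swap b c * t ∈ H := by
    intro b c hbc
    by_cases hb : b = a
    · subst hb; exact step3 c (Ne.symm hbc)
    by_cases hc : c = a
    · subst hc; rw [Equiv.swap_comm]; exact step3 b hb
    · have key : swap b c * t =
          (swap a b * t) * (swap a c * t)⁻¹ * (swap a b * t) := by
        rw [← swap_conj_swap (Ne.symm hc) hbc]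
        simp only [mul_inv_rev, swap_inv, ht, mul_assoc, swap_mul_self_mul]
      rw [key]
      exact H.mul_mem (H.mul_mem (step3 b hb) (H.inv_mem (step3 c hc)))
        (step3 b hb)
  intro f hf
  suffices hind : ∀ (k : ℕ) (l : List (Perm α)), (∀ g ∈ l, IsSwap g) → l.length = 2 * k →
      l.prod ∈ H by
    obtain ⟨l, rfl, hl⟩ := truncSwapFactors f
    obtain ⟨k, hk⟩ := (prod_list_swap_mem_alternatingGroup_iff_even_length hl).1 hf
    rw [← two_mul] at hk
    exact hind k l hl hk
  intro k
  induction k with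
  | zero => intro l _ hl; simp [List.length_eq_zero_iff.1 hl, H.one_mem]
  | succ k ih =>
    intro l hl hn
    rw [Nat.mul_succ] at hn
    obtain ⟨g₁, l, rfl⟩ := l.exists_of_length_succ hn
    rw [List.length_cons, Nat.add_right_cancel_iff] at hn
    obtain ⟨g₂, l, rfl⟩ := l.exists_of_length_succ hn
    rw [List.length_cons, Nat.add_right_cancel_iff] at hn
    rw [List.prod_cons, List.prod_cons, ← mul_assoc]
    refine H.mul_mem ?_ (ih l (fun g hg => hl g (by simp [hg])) hn)
    obtain ⟨u, v, huv, rfl⟩ := hl g₁ (by simp)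
    obtain ⟨p, q, hpq, rfl⟩ := hl g₂ (by simp)
    have key : swap u v * swap p q = (swap u v * t) * (swap p q * t)⁻¹ := by
      simp only [mul_inv_rev, swap_inv, ht, mul_assoc, swap_mul_self_mul]
    rw [key]
    exact H.mul_mem (step4 u v huv) (H.inv_mem (step4 p q hpq))


private lemma stmt_9_aux (n : ℕ) (hn : 5 ≤ n) (hodd : Odd n)
    (h0 : 0 < n) (h1 : 1 < n) (h3 : 3 < n) :
    Subgroup.closure
        ({(List.finRange n).formPerm,
          ([(⟨0, h0⟩ : Fin n), ⟨1, h1⟩, ⟨3, h3⟩]).formPerm} :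
          Set (Equiv.Perm (Fin n))) =
      alternatingGroup (Fin n) := by
  have h2 : 2 < n := by omega
  have h4 : 4 < n := by omega
  set a0 : Fin n := ⟨0, h0⟩
  set a1 : Fin n := ⟨1, h1⟩
  set a2 : Fin n := ⟨2, h2⟩
  set a3 : Fin n := ⟨3, h3⟩
  set a4 : Fin n := ⟨4, h4⟩
  have hne : ∀ (i j : ℕ) (hi : i < n) (hj : j < n), i ≠ j → (⟨i, hi⟩ : Fin n) ≠ ⟨j, hj⟩ :=
    fun i j hi hj h => by simpa [Fin.ext_iff] using h
  set x : Perm (Fin n) := (List.finRange n).formPerm with hxdef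
  set y : Perm (Fin n) := ([a0, a1, a3]).formPerm with hydef
  have hnodup := List.nodup_finRange n
  have hlen : (List.finRange n).length = n := List.length_finRange
  have hcyc : IsCycle x := List.isCycle_formPerm hnodup (by omega)
  have hsupp : x.support = Finset.univ := by
    rw [hxdef, List.support_formPerm_of_nodup _ hnodup
      (fun z hz => by apply_fun List.length at hz; simp at hz; omega)]
    exact List.toFinset_finRange n
  have hx : ∀ (k : ℕ) (hk : k + 1 < n), x ⟨k, by omega⟩ = ⟨k + 1, hk⟩ := by
    intro k hk
    have := List.formPerm_apply_lt_getElem (List.finRange n) hnodup k (by omega)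
    simpa [List.getElem_finRange] using this
  have hx0 : x a0 = a1 := hx 0 h1
  have hx1 : x a1 = a2 := hx 1 h2
  have hx2 : x a2 = a3 := hx 2 h3
  have hx3 : x a3 = a4 := hx 3 h4
  have hy_eq : y = swap a0 a1 * swap a1 a3 := by
    rw [hydef, List.formPerm_cons_cons, List.formPerm_pair]
  have hy1 : y a1 = a3 := by
    rw [hy_eq, Equiv.Perm.mul_apply, swap_apply_left,
      swap_apply_of_ne_of_ne (hne 3 0 h3 h0 (by omega)) (hne 3 1 h3 h1 (by omega))]
  have hy2 : y a2 = a2 := by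
    rw [hy_eq, Equiv.Perm.mul_apply,
      swap_apply_of_ne_of_ne (hne 2 1 h2 h1 (by omega)) (hne 2 3 h2 h3 (by omega)),
      swap_apply_of_ne_of_ne (hne 2 0 h2 h0 (by omega)) (hne 2 1 h2 h1 (by omega))]
  have hy4 : y a4 = a4 := by
    rw [hy_eq, Equiv.Perm.mul_apply,
      swap_apply_of_ne_of_ne (hne 4 1 h4 h1 (by omega)) (hne 4 3 h4 h3 (by omega)),
      swap_apply_of_ne_of_ne (hne 4 0 h4 h0 (by omega)) (hne 4 1 h4 h1 (by omega))]
  have hsign : Perm.sign x = 1 := by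
    have := hcyc.sign
    rw [hsupp] at this
    simp only [Finset.card_univ, Fintype.card_fin] at this
    rw [this, hodd.neg_one_pow, neg_neg]
  apply _root_.le_antisymm
  · rw [closure_le]
    rintro g (rfl | rfl)
    · exact mem_alternatingGroup.2 hsign
    · rw [SetLike.mem_coe, mem_alternatingGroup, hy_eq, map_mul,
        sign_swap (hne 0 1 h0 h1 (by omega)), sign_swap (hne 1 3 h1 h3 (by omega))]
      norm_num
  · set H := Subgroup.closure ({x, y} : Set (Perm (Fin n))) with hH
    have hxH : x ∈ H := subset_closure (Set.mem_insert _ _)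
    have hyH : y ∈ H := subset_closure (Set.mem_insert_of_mem _ rfl)
    have cm : ∀ g p q : Perm (Fin n), g * (p * q) * g⁻¹ = (g * p * g⁻¹) * (g * q * g⁻¹) := by
      intros; group
    have hA : x * y * x⁻¹ = swap a1 a2 * swap a2 a4 := by
      rw [hy_eq, cm, ← swap_apply_apply, ← swap_apply_apply, hx0, hx1, hx3]
    have hB : y * (x * y * x⁻¹) * y⁻¹ = swap a3 a2 * swap a2 a4 := by
      rw [hA, cm, ← swap_apply_apply, ← swap_apply_apply, hy1, hy2, hy4]
    have hC : swap a3 a2 * swap a2 a4 = x * (swap a2 a1 * swap a1 a3) * x⁻¹ := by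
      rw [cm, ← swap_apply_apply, ← swap_apply_apply, hx1, hx2, hx3]
    have hD : swap a2 a1 * swap a1 a3 = x * (swap a1 a0 * swap a0 a2) * x⁻¹ := by
      rw [cm, ← swap_apply_apply, ← swap_apply_apply, hx0, hx1, hx2]
    have hE : swap a1 a0 * swap a0 a2 = swap a1 a2 * swap a0 a1 :=
      swap_shift' (hne 0 1 h0 h1 (by omega)) (hne 0 2 h0 h2 (by omega))
        (hne 1 2 h1 h2 (by omega))
    have hw : y * (x * y * x⁻¹) * y⁻¹ = x * (x * (swap a1 a2 * swap a0 a1) * x⁻¹) * x⁻¹ := by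
      rw [hB, hC, hD, hE]
    have hword : swap a1 a2 * swap a0 a1 =
        x⁻¹ * (x⁻¹ * (y * (x * y * x⁻¹) * y⁻¹) * x) * x := by
      rw [hw]; group
    have hgmem : swap a1 a2 * swap a0 a1 ∈ H := by
      rw [hword]
      have hBmem : y * (x * y * x⁻¹) * y⁻¹ ∈ H :=
        H.mul_mem (H.mul_mem hyH (H.mul_mem (H.mul_mem hxH hyH) (H.inv_mem hxH)))
          (H.inv_mem hyH)
      exact H.mul_mem (H.mul_mem (H.inv_mem hxH)
        (H.mul_mem (H.mul_mem (H.inv_mem hxH) hBmem) hxH)) hxH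
    refine alternating_le_of_cycle hcyc hsupp a0 hxH ?_
    rw [hx0, hx1]
    exact hgmem

/-- For odd `n ≥ 5`, the `n`-cycle `x = (1 2 … n)` and the 3-cycle `y = (1 2 4)`
generate the alternating group `A_n`.  (Points are labelled `0,…,n−1`.) -/
theorem stmt_9 (n : ℕ) (hn : 5 ≤ n) (hodd : Odd n) :
    Subgroup.closure
        ({(List.finRange n).formPerm,
          ([(⟨0, by omega⟩ : Fin n), ⟨1, by omega⟩, ⟨3, by omega⟩]).formPerm} :
          Set (Equiv.Perm (Fin n))) =
      alternatingGroup (Fin n) := by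
  exact stmt_9_aux n hn hodd (by omega) (by omega) (by omega)
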